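/- Let m ≥ 2. The space of complex (m-1)×m matrices A with det(A^{(k)}) ≠ 0 for all k = 1, …, m-1 and det(Â^{(j)}) ≠ 0 for all j = 1, …, m-1, where Â is the (m-1)×(m-1) matrix obtained from A by deleting its first column (with the subspace topology from the space of (m-1)×m complex matrices), is homotopy equivalent to the (2m-2)-torus (S¹)^{2m-2}. -/

import Mathlib

open Matrix

namespace MC
variable {n : ℕ}

variable {n : ℕ}

/-- leading `s × s` minor -/
def lm (M : Matrix (Fin n) (Fin (n+1)) ℂ) (s : ℕ) (hs : s ≤ n) : ℂ :=
  (M.submatrix (Fin.castLE hs) (Fin.castLE (Nat.le_succ_of_le hs))).det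
/-- leading `s × s` minor after deleting first column -/
def lmh (M : Matrix (Fin n) (Fin (n+1)) ℂ) (s : ℕ) (hs : s ≤ n) : ℂ :=
  (Matrix.of fun a b : Fin s => M (Fin.castLE hs a) ⟨(b : ℕ) + 1, by omega⟩).det

lemma lm_congr {M M' : Matrix (Fin n) (Fin (n+1)) ℂ} {s : ℕ} (hs : s ≤ n)
    (h : ∀ (i : Fin n) (j : Fin (n+1)), (i : ℕ) < s → (j : ℕ) < s → M i j = M' i j) :
    lm M s hs = lm M' s hs := by
  unfold lm; congr 1; ext i j
  exact h _ _ (by simpa using i.isLt) (by simpa using j.isLt)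

lemma lmh_congr {M M' : Matrix (Fin n) (Fin (n+1)) ℂ} {s : ℕ} (hs : s ≤ n)
    (h : ∀ (i : Fin n) (j : Fin (n+1)), (i : ℕ) < s → 1 ≤ (j : ℕ) → (j : ℕ) ≤ s →
      M i j = M' i j) :
    lmh M s hs = lmh M' s hs := by
  unfold lmh; congr 1; ext i j
  exact h _ _ (by simpa using i.isLt) (by simp) (by simp)

lemma lm_zero (M : Matrix (Fin n) (Fin (n+1)) ℂ) (h : (0:ℕ) ≤ n) : lm M 0 h = 1 :=
  Matrix.det_isEmpty
lemma lmh_zero (M : Matrix (Fin n) (Fin (n+1)) ℂ) (h : (0:ℕ) ≤ n) : lmh M 0 h = 1 :=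
  Matrix.det_isEmpty

lemma det_single_row {s : ℕ} (N : Matrix (Fin (s+1)) (Fin (s+1)) ℂ) (x : ℂ) :
    (N.updateRow (Fin.last s) (Pi.single (Fin.last s) x)).det
      = x * (N.submatrix Fin.castSucc Fin.castSucc).det := by
  rw [Matrix.det_succ_row _ (Fin.last s)]
  rw [Finset.sum_eq_single (Fin.last s)]
  · simp only [updateRow_self, Pi.single_eq_same, Fin.succAbove_last]
    have : ((N.updateRow (Fin.last s) (Pi.single (Fin.last s) x)).submatrix
        Fin.castSucc Fin.castSucc) = N.submatrix Fin.castSucc Fin.castSucc := by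
      ext i j
      simp [Matrix.updateRow_ne (Fin.castSucc_lt_last i).ne]
    rw [this]
    have : (-1 : ℂ) ^ ((Fin.last s : ℕ) + (Fin.last s : ℕ)) = 1 := by
      rw [← two_mul, pow_mul]; norm_num
    rw [this]; ring
  · intro b _ hb
    simp [Matrix.updateRow_self, Pi.single_eq_of_ne hb]
  · simp

lemma det_expand_last {s : ℕ} (N : Matrix (Fin (s+1)) (Fin (s+1)) ℂ) :
    N.det = N (Fin.last s) (Fin.last s) * (N.submatrix Fin.castSucc Fin.castSucc).det
      + (N.updateRow (Fin.last s) (Function.update (N (Fin.last s)) (Fin.last s) 0)).det := by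
  have hrow : N (Fin.last s)
      = Function.update (N (Fin.last s)) (Fin.last s) 0
        + Pi.single (Fin.last s) (N (Fin.last s) (Fin.last s)) := by
    funext j
    by_cases hj : j = Fin.last s
    · subst hj; simp
    · simp [Function.update_of_ne hj, Pi.single_eq_of_ne hj]
  conv_lhs => rw [← Matrix.updateRow_eq_self N (Fin.last s), hrow]
  rw [Matrix.det_updateRow_add, det_single_row]
  ring

lemma lm_expand (M : Matrix (Fin n) (Fin (n+1)) ℂ) {k : ℕ} (hk : k < n) :
    lm M (k+1) hk = M ⟨k, hk⟩ ⟨k, by omega⟩ * lm M k (le_of_lt hk)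
      + lm (M.updateRow ⟨k, hk⟩ (Function.update (M ⟨k, hk⟩) ⟨k, by omega⟩ 0)) (k+1) hk := by
  have hk1 : k + 1 ≤ n := hk
  set N := M.submatrix (Fin.castLE hk1) (Fin.castLE (Nat.le_succ_of_le hk1)) with hN
  have e2 : N.submatrix Fin.castSucc Fin.castSucc
      = M.submatrix (Fin.castLE (le_of_lt hk)) (Fin.castLE (Nat.le_succ_of_le (le_of_lt hk))) := by
    ext i j; simp [hN, Fin.castLE, Fin.castSucc, Fin.castAdd, Fin.castLT]
  have e3 : N.updateRow (Fin.last k) (Function.update (N (Fin.last k)) (Fin.last k) 0)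
      = (M.updateRow ⟨k, hk⟩ (Function.update (M ⟨k, hk⟩) ⟨k, by omega⟩ 0)).submatrix
          (Fin.castLE hk1) (Fin.castLE (Nat.le_succ_of_le hk1)) := by
    ext i j
    by_cases hi : i = Fin.last k
    · subst hi
      have hc : Fin.castLE hk1 (Fin.last k) = (⟨k, hk⟩ : Fin n) := rfl
      rw [Matrix.updateRow_self, submatrix_apply, hc, Matrix.updateRow_self]
      by_cases hj : j = Fin.last k
      · subst hj
        have hc' : Fin.castLE (Nat.le_succ_of_le hk1) (Fin.last k) = (⟨k, by omega⟩ : Fin (n+1)) := rfl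
        rw [hc', Function.update_self, Function.update_self]
      · have hj' : (Fin.castLE (Nat.le_succ_of_le hk1) j) ≠ (⟨k, by omega⟩ : Fin (n+1)) := by
          intro h; apply hj; apply Fin.ext; simpa using Fin.ext_iff.mp h
        rw [Function.update_of_ne hj', Function.update_of_ne (by
          intro h; exact hj (Fin.ext (by simpa using Fin.ext_iff.mp h))), hN, submatrix_apply, hc]
    · have hi' : (Fin.castLE hk1 i) ≠ (⟨k, hk⟩ : Fin n) := by
        intro h; apply hi; apply Fin.ext; simpa using Fin.ext_iff.mp h
      rw [Matrix.updateRow_ne hi, submatrix_apply, Matrix.updateRow_ne hi']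
      rfl
  show N.det = _
  rw [det_expand_last N, e2, e3]
  rfl

lemma lmh_expand (M : Matrix (Fin n) (Fin (n+1)) ℂ) {k : ℕ} (hk : k < n) :
    lmh M (k+1) hk = M ⟨k, hk⟩ ⟨k+1, by omega⟩ * lmh M k (le_of_lt hk)
      + lmh (M.updateRow ⟨k, hk⟩ (Function.update (M ⟨k, hk⟩) ⟨k+1, by omega⟩ 0)) (k+1) hk := by
  have hk1 : k + 1 ≤ n := hk
  set N := (Matrix.of fun a b : Fin (k+1) => M (Fin.castLE hk1 a) ⟨(b : ℕ) + 1, by omega⟩) with hN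
  have e2 : N.submatrix Fin.castSucc Fin.castSucc
      = (Matrix.of fun a b : Fin k => M (Fin.castLE (le_of_lt hk) a) ⟨(b : ℕ) + 1, by omega⟩) := by
    ext i j; simp [hN, Fin.castLE, Fin.castSucc, Fin.castAdd, Fin.castLT]
  have e3 : N.updateRow (Fin.last k) (Function.update (N (Fin.last k)) (Fin.last k) 0)
      = (Matrix.of fun a b : Fin (k+1) =>
          (M.updateRow ⟨k, hk⟩ (Function.update (M ⟨k, hk⟩) ⟨k+1, by omega⟩ 0))
            (Fin.castLE hk1 a) ⟨(b : ℕ) + 1, by omega⟩) := by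
    ext i j
    by_cases hi : i = Fin.last k
    · subst hi
      have hc : Fin.castLE hk1 (Fin.last k) = (⟨k, hk⟩ : Fin n) := rfl
      rw [Matrix.updateRow_self, of_apply, hc, Matrix.updateRow_self]
      by_cases hj : j = Fin.last k
      · subst hj
        have hc' : (⟨(Fin.last k : ℕ) + 1, by omega⟩ : Fin (n+1)) = ⟨k+1, by omega⟩ := rfl
        rw [Function.update_self, hc', Function.update_self]
      · have hj' : (⟨(j : ℕ) + 1, by omega⟩ : Fin (n+1)) ≠ (⟨k+1, by omega⟩ : Fin (n+1)) := by
          intro h; apply hj; apply Fin.ext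
          have := Fin.ext_iff.mp h; simpa using this
        rw [Function.update_of_ne hj', Function.update_of_ne (by
          intro h; exact hj (Fin.ext (by simpa using Fin.ext_iff.mp h))), hN, of_apply, hc]
    · have hi' : (Fin.castLE hk1 i) ≠ (⟨k, hk⟩ : Fin n) := by
        intro h; apply hi; apply Fin.ext; simpa using Fin.ext_iff.mp h
      rw [Matrix.updateRow_ne hi, of_apply, Matrix.updateRow_ne hi']
      rfl
  show N.det = _
  rw [det_expand_last N, e2, e3]
  rfl

noncomputable def psiStep (d e : Fin n → ℂ) (c : Fin n → Fin (n+1) → ℂ) (k : ℕ)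
    (M : Matrix (Fin n) (Fin (n+1)) ℂ) : Matrix (Fin n) (Fin (n+1)) ℂ :=
    if hk : k < n then
      let kf : Fin n := ⟨k, hk⟩
      let dprev : ℂ := if k = 0 then 1 else d ⟨k-1, by omega⟩
      let eprev : ℂ := if k = 0 then 1 else e ⟨k-1, by omega⟩
      let a : ℂ := (d kf - lm (M.updateRow kf
        (fun j => if (j : ℕ) = k then 0 else c kf j)) (k+1) hk) / dprev
      let b : ℂ := (e kf - lmh (M.updateRow kf
        (fun j => if (j : ℕ) = k then a else if (j : ℕ) = k+1 then 0 else c kf j)) (k+1) hk) / eprev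
      M.updateRow kf (fun j => if (j : ℕ) = k then a else if (j : ℕ) = k+1 then b else c kf j)
    else M

noncomputable def psi (d e : Fin n → ℂ) (c : Fin n → Fin (n+1) → ℂ) :
    ℕ → Matrix (Fin n) (Fin (n+1)) ℂ :=
  fun k => Nat.rec 0 (fun k M => psiStep d e c k M) k

lemma psi_succ (d e : Fin n → ℂ) (c : Fin n → Fin (n+1) → ℂ) (k : ℕ) :
    psi d e c (k+1) = psiStep d e c k (psi d e c k) := rfl

lemma psi_agree (d e : Fin n → ℂ) (c : Fin n → Fin (n+1) → ℂ) {k l : ℕ} (hkl : k ≤ l)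
    (i : Fin n) (hi : (i : ℕ) < k) : psi d e c l i = psi d e c k i := by
  induction l, hkl using Nat.le_induction with
  | base => rfl
  | succ l hl ih =>
    rw [psi_succ, psiStep]
    split
    · next hln =>
      simp only
      rw [Matrix.updateRow_ne, ih]
      intro h; subst h; simp at hi; omega
    · exact ih

lemma psi_minors (d e : Fin n → ℂ) (c : Fin n → Fin (n+1) → ℂ)
    (hd : ∀ i, d i ≠ 0) (he : ∀ i, e i ≠ 0) :
    ∀ (k : ℕ) (hk : k ≤ n),
      lm (psi d e c n) k hk = (if h : k = 0 then 1 else d ⟨k-1, by omega⟩)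
      ∧ lmh (psi d e c n) k hk = (if h : k = 0 then 1 else e ⟨k-1, by omega⟩) := by
  intro k
  induction k with
  | zero => intro hk; rw [lm_zero, lmh_zero]; simp
  | succ k IH =>
    intro hk1
    have hkn : k < n := hk1
    obtain ⟨IHd, IHe⟩ := IH (le_of_lt hkn)
    -- abbreviations
    set M := psi d e c k with hM
    set kf : Fin n := ⟨k, hkn⟩ with hkf
    set Dp : ℂ := if h : k = 0 then 1 else d ⟨k-1, by omega⟩ with hDp
    set Ep : ℂ := if h : k = 0 then 1 else e ⟨k-1, by omega⟩ with hEp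
    set R0 : Fin (n+1) → ℂ := fun j => if (j : ℕ) = k then 0 else c kf j with hR0
    set A : ℂ := (d kf - lm (M.updateRow kf R0) (k+1) hkn) / Dp with hA
    set R1 : Fin (n+1) → ℂ :=
      fun j => if (j : ℕ) = k then A else if (j : ℕ) = k+1 then 0 else c kf j with hR1
    set B : ℂ := (e kf - lmh (M.updateRow kf R1) (k+1) hkn) / Ep with hB
    set RF : Fin (n+1) → ℂ :=
      fun j => if (j : ℕ) = k then A else if (j : ℕ) = k+1 then B else c kf j with hRF
    have hDp0 : Dp ≠ 0 := by
      rw [hDp]; split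
      · exact one_ne_zero
      · exact hd _
    have hEp0 : Ep ≠ 0 := by
      rw [hEp]; split
      · exact one_ne_zero
      · exact he _
    have hpsi : psi d e c (k+1) = M.updateRow kf RF := by
      rw [psi_succ]; unfold psiStep; rw [dif_pos hkn]; rfl
    -- pass from psi n to psi (k+1)
    have hcongr : ∀ (P : Matrix (Fin n) (Fin (n+1)) ℂ → Prop), True := fun _ => trivial
    have h1 : lm (psi d e c n) (k+1) hk1 = lm (M.updateRow kf RF) (k+1) hk1 := by
      rw [← hpsi]
      exact lm_congr _ (fun i j hi _ => by rw [psi_agree d e c hk1 i hi])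
    have h1h : lmh (psi d e c n) (k+1) hk1 = lmh (M.updateRow kf RF) (k+1) hk1 := by
      rw [← hpsi]
      exact lmh_congr _ (fun i j hi _ _ => by rw [psi_agree d e c hk1 i hi])
    -- previous minors of the updated matrix
    have hprevd : lm (M.updateRow kf RF) k (le_of_lt hkn) = Dp := by
      rw [← IHd]
      refine lm_congr _ (fun i j hi hj => ?_)
      rw [Matrix.updateRow_ne (by intro h; subst h; simp [hkf] at hi; try omega)]
      rw [psi_agree d e c (le_of_lt hkn) i hi]
    have hpreve : lmh (M.updateRow kf RF) k (le_of_lt hkn) = Ep := by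
      rw [← IHe]
      refine lmh_congr _ (fun i j hi _ _ => ?_)
      rw [Matrix.updateRow_ne (by intro h; subst h; simp [hkf] at hi; try omega)]
      rw [psi_agree d e c (le_of_lt hkn) i hi]
    constructor
    · rw [h1, lm_expand _ hkn]
      have hent : (M.updateRow kf RF) ⟨k, hkn⟩ ⟨k, by omega⟩ = A := by
        rw [← hkf, Matrix.updateRow_self, hRF]
        simp
      have hzero : lm ((M.updateRow kf RF).updateRow ⟨k, hkn⟩
          (Function.update ((M.updateRow kf RF) ⟨k, hkn⟩) ⟨k, by omega⟩ 0)) (k+1) hkn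
          = lm (M.updateRow kf R0) (k+1) hkn := by
        refine lm_congr _ (fun i j hi hj => ?_)
        by_cases hik : i = kf
        · subst hik
          rw [← hkf, Matrix.updateRow_self, Matrix.updateRow_self, Matrix.updateRow_self]
          rw [Function.update_apply]
          by_cases hjk : (j : ℕ) = k
          · have : j = (⟨k, by omega⟩ : Fin (n+1)) := Fin.ext (by simpa using hjk)
            rw [if_pos this]
            show (0:ℂ) = if (j:ℕ) = k then 0 else c kf j
            rw [if_pos hjk]
          · have : j ≠ (⟨k, by omega⟩ : Fin (n+1)) := by
              intro h; apply hjk; rw [h]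
            rw [if_neg this]
            show (if (j:ℕ) = k then A else if (j:ℕ) = k+1 then B else c kf j)
              = (if (j:ℕ) = k then 0 else c kf j)
            have hjk1 : ¬ (j : ℕ) = k + 1 := by omega
            rw [if_neg hjk, if_neg hjk, if_neg hjk1]
        · rw [← hkf]
          rw [Matrix.updateRow_ne hik, Matrix.updateRow_ne hik, Matrix.updateRow_ne hik]
      rw [hent, hprevd, hzero, hA, div_mul_cancel₀ _ hDp0]
      rw [dif_neg (Nat.succ_ne_zero k)]
      have : k + 1 - 1 = k := rfl
      simp only [this]
      rw [sub_add_cancel]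
    · rw [h1h, lmh_expand _ hkn]
      have hent : (M.updateRow kf RF) ⟨k, hkn⟩ ⟨k+1, by omega⟩ = B := by
        rw [← hkf, Matrix.updateRow_self, hRF]
        simp
      have hzero : lmh ((M.updateRow kf RF).updateRow ⟨k, hkn⟩
          (Function.update ((M.updateRow kf RF) ⟨k, hkn⟩) ⟨k+1, by omega⟩ 0)) (k+1) hkn
          = lmh (M.updateRow kf R1) (k+1) hkn := by
        refine lmh_congr _ (fun i j hi hj1 hjk1 => ?_)
        by_cases hik : i = kf
        · subst hik
          rw [← hkf, Matrix.updateRow_self, Matrix.updateRow_self, Matrix.updateRow_self]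
          rw [Function.update_apply]
          by_cases hjk : (j : ℕ) = k + 1
          · have : j = (⟨k+1, by omega⟩ : Fin (n+1)) := Fin.ext (by simpa using hjk)
            rw [if_pos this]
            show (0:ℂ) = if (j:ℕ) = k then A else if (j:ℕ) = k+1 then 0 else c kf j
            rw [if_neg (show ¬ (j : ℕ) = k by omega), if_pos hjk]
          · have : j ≠ (⟨k+1, by omega⟩ : Fin (n+1)) := by
              intro h; apply hjk; rw [h]
            rw [if_neg this]
            show (if (j:ℕ) = k then A else if (j:ℕ) = k+1 then B else c kf j)
              = (if (j:ℕ) = k then A else if (j:ℕ) = k+1 then 0 else c kf j)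
            simp only [if_neg hjk]
        · rw [← hkf]
          rw [Matrix.updateRow_ne hik, Matrix.updateRow_ne hik, Matrix.updateRow_ne hik]
      rw [hent, hpreve, hzero, hB, div_mul_cancel₀ _ hEp0]
      rw [dif_neg (Nat.succ_ne_zero k)]
      have : k + 1 - 1 = k := rfl
      simp only [this]
      rw [sub_add_cancel]
lemma lm_nat {n : ℕ} (M : Matrix (Fin n) (Fin (n+1)) ℂ) {s t : ℕ} (h : s = t)
    (hs : s ≤ n) (ht : t ≤ n) : lm M s hs = lm M t ht := by subst h; rfl
lemma lmh_nat {n : ℕ} (M : Matrix (Fin n) (Fin (n+1)) ℂ) {s t : ℕ} (h : s = t)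
    (hs : s ≤ n) (ht : t ≤ n) : lmh M s hs = lmh M t ht := by subst h; rfl

set_option maxHeartbeats 1000000 in
lemma psi_eq_self (A : Matrix (Fin n) (Fin (n+1)) ℂ) (c : Fin n → Fin (n+1) → ℂ)
    (d e : Fin n → ℂ)
    (hd : ∀ i : Fin n, d i = lm A ((i:ℕ)+1) i.isLt)
    (he : ∀ i : Fin n, e i = lmh A ((i:ℕ)+1) i.isLt)
    (hA : ∀ (s : ℕ), 1 ≤ s → ∀ hs : s ≤ n, lm A s hs ≠ 0)
    (hA' : ∀ (s : ℕ), 1 ≤ s → ∀ hs : s ≤ n, lmh A s hs ≠ 0)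
    (hc : ∀ (i : Fin n) (j : Fin (n+1)), (j:ℕ) ≠ (i:ℕ) → (j:ℕ) ≠ (i:ℕ)+1 → c i j = A i j) :
    psi d e c n = A := by
  suffices h : ∀ (k : ℕ), k ≤ n → ∀ i : Fin n, (i:ℕ) < k → psi d e c k i = A i by
    ext i j
    rw [psi_agree d e c (le_refl n) i i.isLt, h n le_rfl i i.isLt]
  intro k
  induction k with
  | zero => intro _ i hi; omega
  | succ k IH =>
    intro hk1 i hi
    have hkn : k < n := hk1
    set M := psi d e c k with hM
    set kf : Fin n := ⟨k, hkn⟩ with hkf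
    set ck : Fin (n+1) := ⟨k, by omega⟩ with hck
    set ck1 : Fin (n+1) := ⟨k+1, by omega⟩ with hck1
    set Dp : ℂ := if k = 0 then 1 else d ⟨k-1, by omega⟩ with hDp
    set Ep : ℂ := if k = 0 then 1 else e ⟨k-1, by omega⟩ with hEp
    set R0 : Fin (n+1) → ℂ := fun j => if (j : ℕ) = k then 0 else c kf j with hR0
    set Aa : ℂ := (d kf - lm (M.updateRow kf R0) (k+1) hkn) / Dp with hAa
    set R1 : Fin (n+1) → ℂ :=
      fun j => if (j : ℕ) = k then Aa else if (j : ℕ) = k+1 then 0 else c kf j with hR1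
    set Bb : ℂ := (e kf - lmh (M.updateRow kf R1) (k+1) hkn) / Ep with hBb
    set RF : Fin (n+1) → ℂ :=
      fun j => if (j : ℕ) = k then Aa else if (j : ℕ) = k+1 then Bb else c kf j with hRF
    have hpsi : psi d e c (k+1) = M.updateRow kf RF := by
      rw [psi_succ]; unfold psiStep; rw [dif_pos hkn]; try rfl
    -- old rows
    have hrows : ∀ i' : Fin n, (i' : ℕ) < k → M i' = A i' := fun i' hi' => IH (le_of_lt hkn) i' hi'
    by_cases hik : i = kf
    · subst hik
      rw [hpsi, Matrix.updateRow_self]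
      -- previous minors of A
      have hlmAk : lm A k (le_of_lt hkn) = Dp := by
        rw [hDp]
        by_cases h0 : k = 0
        · subst h0; rw [if_pos rfl]; exact lm_zero A _
        · rw [if_neg h0]
          exact ((hd ⟨k-1, by omega⟩).trans (lm_nat A (by simp; omega) _ _)).symm
      have hlmhAk : lmh A k (le_of_lt hkn) = Ep := by
        rw [hEp]
        by_cases h0 : k = 0
        · subst h0; rw [if_pos rfl]; exact lmh_zero A _
        · rw [if_neg h0]
          exact ((he ⟨k-1, by omega⟩).trans (lmh_nat A (by simp; omega) _ _)).symm
      have hDp0 : Dp ≠ 0 := by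
        rw [hDp]
        by_cases h0 : k = 0
        · rw [if_pos h0]; exact one_ne_zero
        · rw [if_neg h0]
          rw [hd _]
          exact hA _ (by omega) _
      have hEp0 : Ep ≠ 0 := by
        rw [hEp]
        by_cases h0 : k = 0
        · rw [if_pos h0]; exact one_ne_zero
        · rw [if_neg h0]
          rw [he _]
          exact hA' _ (by omega) _
      have hdkf : d kf = lm A (k+1) hkn := hd kf
      have hekf : e kf = lmh A (k+1) hkn := he kf
      -- identification of the zeroed minor for the first column count
      have hM0 : lm (M.updateRow kf R0) (k+1) hkn
          = lm (A.updateRow kf (Function.update (A kf) ck 0)) (k+1) hkn := by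
        refine lm_congr _ (fun i' j' hi' hj' => ?_)
        by_cases hik' : i' = kf
        · subst hik'
          rw [Matrix.updateRow_self, Matrix.updateRow_self]
          show (if (j' : ℕ) = k then 0 else c kf j') = _
          rw [Function.update_apply]
          by_cases hjk : (j' : ℕ) = k
          · have hj'c : j' = ck := by
              apply Fin.ext; rw [hck]; simpa using hjk
            rw [if_pos hjk, if_pos hj'c]
          · have hj'c : ¬ (j' = ck) := by
              intro hh; apply hjk; rw [hh, hck]
            rw [if_neg hjk, if_neg hj'c]
            exact hc kf j' (by simpa [hkf] using hjk) (by simp [hkf]; omega)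
        · have hik2 : (i' : ℕ) < k := by
            rcases Nat.lt_succ_iff_lt_or_eq.mp hi' with h | h
            · exact h
            · exact absurd (Fin.ext h : i' = kf) hik'
          rw [Matrix.updateRow_ne hik', Matrix.updateRow_ne hik', hrows i' hik2]
      -- value of Aa
      have ha : Aa = A kf ck := by
        rw [hAa, hdkf, hM0, lm_expand A hkn]
        have h1 : A ⟨k, hkn⟩ ⟨k, by omega⟩ = A kf ck := rfl
        rw [h1, hlmAk]
        have h2 : (A.updateRow ⟨k, hkn⟩ (Function.update (A ⟨k, hkn⟩) ⟨k, by omega⟩ 0))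
            = (A.updateRow kf (Function.update (A kf) ck 0)) := rfl
        rw [h2, add_sub_cancel_right, mul_div_cancel_right₀ _ hDp0]
      -- identification for the hat minors
      have hM1 : lmh (M.updateRow kf R1) (k+1) hkn
          = lmh (A.updateRow kf (Function.update (A kf) ck1 0)) (k+1) hkn := by
        refine lmh_congr _ (fun i' j' hi' hj1 hjk1 => ?_)
        by_cases hik' : i' = kf
        · subst hik'
          rw [Matrix.updateRow_self, Matrix.updateRow_self]
          show (if (j' : ℕ) = k then Aa else if (j' : ℕ) = k+1 then 0 else c kf j') = _
          rw [Function.update_apply]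
          by_cases hjk : (j' : ℕ) = k+1
          · have hne : ¬ ((j' : ℕ) = k) := by omega
            have hj'c : j' = ck1 := by
              apply Fin.ext; rw [hck1]; simpa using hjk
            rw [if_neg hne, if_pos hjk, if_pos hj'c]
          · have hj'c : ¬ (j' = ck1) := by
              intro hh; apply hjk; rw [hh, hck1]
            rw [if_neg hj'c]
            by_cases hjk0 : (j' : ℕ) = k
            · have hj'ck : j' = ck := by
                apply Fin.ext; rw [hck]; simpa using hjk0
              rw [if_pos hjk0, ha, hj'ck]
            · rw [if_neg hjk0, if_neg hjk]
              exact hc kf j' (by simpa [hkf] using hjk0) (by simpa [hkf] using hjk)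
        · have hik2 : (i' : ℕ) < k := by
            rcases Nat.lt_succ_iff_lt_or_eq.mp hi' with h | h
            · exact h
            · exact absurd (Fin.ext h : i' = kf) hik'
          rw [Matrix.updateRow_ne hik', Matrix.updateRow_ne hik', hrows i' hik2]
      have hb : Bb = A kf ck1 := by
        rw [hBb, hekf, hM1, lmh_expand A hkn]
        have h1 : A ⟨k, hkn⟩ ⟨k+1, by omega⟩ = A kf ck1 := rfl
        rw [h1, hlmhAk]
        have h2 : (A.updateRow ⟨k, hkn⟩ (Function.update (A ⟨k, hkn⟩) ⟨k+1, by omega⟩ 0))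
            = (A.updateRow kf (Function.update (A kf) ck1 0)) := rfl
        rw [h2, add_sub_cancel_right, mul_div_cancel_right₀ _ hEp0]
      -- conclude the row equality
      funext j
      show (if (j : ℕ) = k then Aa else if (j : ℕ) = k+1 then Bb else c kf j) = A kf j
      by_cases hjk : (j : ℕ) = k
      · have hjc : j = ck := by apply Fin.ext; rw [hck]; simpa using hjk
        rw [if_pos hjk, ha, hjc]
      · rw [if_neg hjk]
        by_cases hjk1 : (j : ℕ) = k+1
        · have hjc : j = ck1 := by apply Fin.ext; rw [hck1]; simpa using hjk1
          rw [if_pos hjk1, hb, hjc]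
        · rw [if_neg hjk1]
          exact hc kf j (by simpa [hkf] using hjk) (by simpa [hkf] using hjk1)
    · have hik2 : (i : ℕ) < k := by
        rcases Nat.lt_succ_iff_lt_or_eq.mp hi with h | h
        · exact h
        · exact absurd (Fin.ext h : i = kf) hik
      rw [hpsi, Matrix.updateRow_ne hik, hrows i hik2]
section cont
variable {X : Type*} [TopologicalSpace X]

lemma continuous_lm {F : X → Matrix (Fin n) (Fin (n+1)) ℂ} (hF : Continuous F)
    (s : ℕ) (hs : s ≤ n) : Continuous fun x => lm (F x) s hs :=
  (hF.matrix_submatrix _ _).matrix_det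

lemma continuous_lmh {F : X → Matrix (Fin n) (Fin (n+1)) ℂ} (hF : Continuous F)
    (s : ℕ) (hs : s ≤ n) : Continuous fun x => lmh (F x) s hs := by
  apply Continuous.matrix_det
  apply continuous_matrix
  intro i j
  simp only [Matrix.of_apply]
  exact (continuous_apply _).comp ((continuous_apply _).comp hF)

lemma continuous_psi {D E : X → Fin n → ℂ} {C : X → Fin n → Fin (n+1) → ℂ}
    (hD : Continuous D) (hE : Continuous E) (hC : Continuous C)
    (hD0 : ∀ x i, D x i ≠ 0) (hE0 : ∀ x i, E x i ≠ 0) (k : ℕ) :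
    Continuous fun x => psi (D x) (E x) (C x) k := by
  induction k with
  | zero => exact continuous_const
  | succ k IH =>
    have hCe : ∀ (i : Fin n) (j : Fin (n+1)), Continuous fun x => C x i j :=
      fun i j => (continuous_apply _).comp ((continuous_apply _).comp hC)
    have hDe : ∀ i : Fin n, Continuous fun x => D x i :=
      fun i => (continuous_apply _).comp hD
    have hEe : ∀ i : Fin n, Continuous fun x => E x i :=
      fun i => (continuous_apply _).comp hE
    simp only [psi_succ, psiStep]
    by_cases hk : k < n
    · simp only [dif_pos hk]
      have hDp : Continuous fun x => (if k = 0 then (1:ℂ) else D x ⟨k-1, by omega⟩) := by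
        split
        · exact continuous_const
        · exact hDe _
      have hDp0 : ∀ x, (if k = 0 then (1:ℂ) else D x ⟨k-1, by omega⟩) ≠ 0 := by
        intro x; split
        · exact one_ne_zero
        · exact hD0 x _
      have hEp : Continuous fun x => (if k = 0 then (1:ℂ) else E x ⟨k-1, by omega⟩) := by
        split
        · exact continuous_const
        · exact hEe _
      have hEp0 : ∀ x, (if k = 0 then (1:ℂ) else E x ⟨k-1, by omega⟩) ≠ 0 := by
        intro x; split
        · exact one_ne_zero
        · exact hE0 x _
      have hR0 : Continuous fun x => (fun j : Fin (n+1) =>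
          if (j : ℕ) = k then (0:ℂ) else C x ⟨k, hk⟩ j) := by
        apply continuous_pi
        intro j
        split
        · exact continuous_const
        · exact hCe _ _
      have hM0 : Continuous fun x =>
          (psi (D x) (E x) (C x) k).updateRow ⟨k, hk⟩
            (fun j => if (j : ℕ) = k then (0:ℂ) else C x ⟨k, hk⟩ j) :=
        IH.matrix_updateRow _ hR0
      have ha : Continuous fun x =>
          (D x ⟨k, hk⟩ - lm ((psi (D x) (E x) (C x) k).updateRow ⟨k, hk⟩
            (fun j => if (j : ℕ) = k then (0:ℂ) else C x ⟨k, hk⟩ j)) (k+1) hk)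
          / (if k = 0 then (1:ℂ) else D x ⟨k-1, by omega⟩) :=
        ((hDe _).sub (continuous_lm hM0 _ _)).div hDp hDp0
      have hR1 : Continuous fun x => (fun j : Fin (n+1) =>
          if (j : ℕ) = k then
            (D x ⟨k, hk⟩ - lm ((psi (D x) (E x) (C x) k).updateRow ⟨k, hk⟩
              (fun j => if (j : ℕ) = k then (0:ℂ) else C x ⟨k, hk⟩ j)) (k+1) hk)
            / (if k = 0 then (1:ℂ) else D x ⟨k-1, by omega⟩)
          else if (j : ℕ) = k+1 then (0:ℂ) else C x ⟨k, hk⟩ j) := by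
        apply continuous_pi
        intro j
        split
        · exact ha
        · split
          · exact continuous_const
          · exact hCe _ _
      have hb : Continuous fun x =>
          (E x ⟨k, hk⟩ - lmh ((psi (D x) (E x) (C x) k).updateRow ⟨k, hk⟩
            (fun j => if (j : ℕ) = k then
              (D x ⟨k, hk⟩ - lm ((psi (D x) (E x) (C x) k).updateRow ⟨k, hk⟩
                (fun j => if (j : ℕ) = k then (0:ℂ) else C x ⟨k, hk⟩ j)) (k+1) hk)
              / (if k = 0 then (1:ℂ) else D x ⟨k-1, by omega⟩)
            else if (j : ℕ) = k+1 then (0:ℂ) else C x ⟨k, hk⟩ j)) (k+1) hk)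
          / (if k = 0 then (1:ℂ) else E x ⟨k-1, by omega⟩) :=
        ((hEe _).sub (continuous_lmh (IH.matrix_updateRow _ hR1) _ _)).div hEp hEp0
      apply continuous_matrix
      intro i j
      simp only [Matrix.updateRow_apply]
      split
      · split
        · exact ha
        · split
          · exact hb
          · exact hCe _ _
      · exact (continuous_apply j).comp ((continuous_apply i).comp IH)
    · simp only [dif_neg hk]
      exact IH
end cont


abbrev Sp (n : ℕ) : Type :=
  {A : Matrix (Fin n) (Fin (n+1)) ℂ //
    (∀ k : ℕ, 1 ≤ k → ∀ hk : k ≤ n, lm A k hk ≠ 0) ∧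
    (∀ k : ℕ, 1 ≤ k → ∀ hk : k ≤ n, lmh A k hk ≠ 0)}

abbrev Tor (n : ℕ) : Type := (Fin n ⊕ Fin n) → Metric.sphere (0:ℂ) 1

noncomputable def scale (t : ℝ) (z : ℂ) : ℂ := z * ((‖z‖ ^ (t - 1) : ℝ) : ℂ)

lemma scale_ne_zero (t : ℝ) {z : ℂ} (hz : z ≠ 0) : scale t z ≠ 0 := by
  apply mul_ne_zero hz
  exact_mod_cast (Real.rpow_pos_of_pos (norm_pos_iff.mpr hz) _).ne'

lemma scale_one (z : ℂ) : scale 1 z = z := by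
  simp [scale]

lemma scale_zero (z : ℂ) : scale 0 z = z / (‖z‖ : ℂ) := by
  simp only [scale, zero_sub, Real.rpow_neg_one]
  rw [Complex.ofReal_inv, div_eq_mul_inv]

lemma sphere_ne_zero (z : Metric.sphere (0:ℂ) 1) : (z:ℂ) ≠ 0 := by
  have := z.2
  rw [mem_sphere_zero_iff_norm] at this
  intro h; rw [h] at this; simp at this

lemma continuous_scale_comp {X : Type} [TopologicalSpace X] {u : X → ℂ}
    (hu : Continuous u) (hu0 : ∀ x, u x ≠ 0) :
    Continuous fun p : unitInterval × X => scale (p.1 : ℝ) (u p.2) := by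
  rw [continuous_iff_continuousAt]
  intro p
  have h2 : ContinuousAt (fun q : unitInterval × X => (‖u q.2‖, (q.1:ℝ) - 1)) p :=
    ((continuous_norm.comp (hu.comp continuous_snd)).prodMk
      ((continuous_subtype_val.comp continuous_fst).sub continuous_const)).continuousAt
  have h1 : ContinuousAt (fun q : ℝ × ℝ => q.1 ^ q.2) (‖u p.2‖, (p.1:ℝ) - 1) :=
    Real.continuousAt_rpow _ (Or.inl (norm_ne_zero_iff.mpr (hu0 p.2)))
  have h3 : ContinuousAt (fun q : unitInterval × X => ‖u q.2‖ ^ ((q.1:ℝ) - 1)) p :=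
    h1.comp (f := fun q : unitInterval × X => (‖u q.2‖, (q.1:ℝ) - 1)) h2
  have h4 : ContinuousAt
      (fun q : unitInterval × X => ((‖u q.2‖ ^ ((q.1:ℝ) - 1) : ℝ) : ℂ)) p :=
    Complex.continuous_ofReal.continuousAt.comp
      (f := fun q : unitInterval × X => ‖u q.2‖ ^ ((q.1:ℝ) - 1)) h3
  exact ((hu.comp continuous_snd).continuousAt).mul h4

variable (n : ℕ)

noncomputable def dm (A : Sp n) (i : Fin n) : ℂ := lm A.1 ((i:ℕ)+1) i.isLt
noncomputable def em (A : Sp n) (i : Fin n) : ℂ := lmh A.1 ((i:ℕ)+1) i.isLt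

lemma dm_ne_zero (A : Sp n) (i : Fin n) : dm n A i ≠ 0 := A.2.1 _ (by omega) _
lemma em_ne_zero (A : Sp n) (i : Fin n) : em n A i ≠ 0 := A.2.2 _ (by omega) _

lemma continuous_dm (i : Fin n) : Continuous fun A : Sp n => dm n A i :=
  continuous_lm continuous_subtype_val _ _
lemma continuous_em (i : Fin n) : Continuous fun A : Sp n => em n A i :=
  continuous_lmh continuous_subtype_val _ _

/-- normalization to the unit sphere -/
noncomputable def unitize (z : ℂ) (hz : z ≠ 0) : Metric.sphere (0:ℂ) 1 :=
  ⟨z / (‖z‖ : ℂ), by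
    rw [mem_sphere_zero_iff_norm, norm_div]
    rw [Complex.norm_real, Real.norm_eq_abs, abs_of_nonneg (norm_nonneg z)]
    exact div_self (norm_ne_zero_iff.mpr hz)⟩

/-- the map to the torus -/
noncomputable def fmap (A : Sp n) : Tor n := fun i =>
  Sum.rec (fun i => unitize (dm n A i) (dm_ne_zero n A i))
          (fun i => unitize (em n A i) (em_ne_zero n A i)) i

lemma continuous_fmap : Continuous (fmap n) := by
  apply continuous_pi
  intro i
  cases i with
  | inl i =>
    apply Continuous.subtype_mk
    exact (continuous_dm n i).div
      (Complex.continuous_ofReal.comp ((continuous_dm n i).norm))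
      (fun A => by
        simpa using norm_ne_zero_iff.mpr (dm_ne_zero n A i))
  | inr i =>
    apply Continuous.subtype_mk
    exact (continuous_em n i).div
      (Complex.continuous_ofReal.comp ((continuous_em n i).norm))
      (fun A => by
        simpa using norm_ne_zero_iff.mpr (em_ne_zero n A i))

/-- membership of psi matrices in the space -/
lemma psi_mem (d e : Fin n → ℂ) (c : Fin n → Fin (n+1) → ℂ)
    (hd : ∀ i, d i ≠ 0) (he : ∀ i, e i ≠ 0) :
    (∀ k : ℕ, 1 ≤ k → ∀ hk : k ≤ n, lm (psi d e c n) k hk ≠ 0) ∧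
    (∀ k : ℕ, 1 ≤ k → ∀ hk : k ≤ n, lmh (psi d e c n) k hk ≠ 0) := by
  constructor
  · intro k hk1 hk
    rw [(psi_minors d e c hd he k hk).1, dif_neg (by omega)]
    exact hd _
  · intro k hk1 hk
    rw [(psi_minors d e c hd he k hk).2, dif_neg (by omega)]
    exact he _

/-- the map from the torus -/
noncomputable def gmap (z : Tor n) : Sp n :=
  ⟨psi (fun i => (z (.inl i) : ℂ)) (fun i => (z (.inr i) : ℂ)) 0 n,
    psi_mem n _ _ _ (fun i => sphere_ne_zero _) (fun i => sphere_ne_zero _)⟩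

lemma continuous_gmap : Continuous (gmap n) := by
  apply Continuous.subtype_mk
  apply continuous_psi
  · exact continuous_pi fun i => continuous_subtype_val.comp (continuous_apply _)
  · exact continuous_pi fun i => continuous_subtype_val.comp (continuous_apply _)
  · exact continuous_const
  · exact fun z i => sphere_ne_zero _
  · exact fun z i => sphere_ne_zero _

lemma fmap_gmap (z : Tor n) : fmap n (gmap n z) = z := by
  funext i
  have hmem := psi_minors (n := n) (fun i => (z (.inl i) : ℂ)) (fun i => (z (.inr i) : ℂ)) 0
    (fun i => sphere_ne_zero _) (fun i => sphere_ne_zero _)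
  have key : ∀ i : Fin n, dm n (gmap n z) i = (z (.inl i) : ℂ) := by
    intro i
    have h := (hmem ((i:ℕ)+1) i.isLt).1
    rw [dif_neg (by omega)] at h
    exact h
  have key' : ∀ i : Fin n, em n (gmap n z) i = (z (.inr i) : ℂ) := by
    intro i
    have h := (hmem ((i:ℕ)+1) i.isLt).2
    rw [dif_neg (by omega)] at h
    exact h
  have hnorm : ∀ w : Metric.sphere (0:ℂ) 1, ‖(w:ℂ)‖ = 1 := by
    intro w; have := w.2; rwa [mem_sphere_zero_iff_norm] at this
  cases i with
  | inl i =>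
    apply Subtype.ext
    show dm n (gmap n z) i / _ = _
    rw [key i, hnorm (z (.inl i))]
    simp
  | inr i =>
    apply Subtype.ext
    show em n (gmap n z) i / _ = _
    rw [key' i, hnorm (z (.inr i))]
    simp

/-- the homotopy matrix -/
noncomputable def hmat (p : unitInterval × Sp n) : Matrix (Fin n) (Fin (n+1)) ℂ :=
  psi (fun i => scale (p.1:ℝ) (dm n p.2 i)) (fun i => scale (p.1:ℝ) (em n p.2 i))
    (fun i j => ((p.1:ℝ) : ℂ) * p.2.1 i j) n

lemma hmat_mem (p : unitInterval × Sp n) :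
    (∀ k : ℕ, 1 ≤ k → ∀ hk : k ≤ n, lm (hmat n p) k hk ≠ 0) ∧
    (∀ k : ℕ, 1 ≤ k → ∀ hk : k ≤ n, lmh (hmat n p) k hk ≠ 0) :=
  psi_mem n _ _ _ (fun i => scale_ne_zero _ (dm_ne_zero n p.2 i))
    (fun i => scale_ne_zero _ (em_ne_zero n p.2 i))

lemma continuous_hmat : Continuous (hmat n) := by
  apply continuous_psi
  · exact continuous_pi fun i =>
      continuous_scale_comp (continuous_dm n i) (fun A => dm_ne_zero n A i)
  · exact continuous_pi fun i =>
      continuous_scale_comp (continuous_em n i) (fun A => em_ne_zero n A i)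
  · apply continuous_pi; intro i; apply continuous_pi; intro j
    exact ((Complex.continuous_ofReal.comp
      (continuous_subtype_val.comp continuous_fst)).mul
      ((continuous_subtype_val.comp continuous_snd
        : Continuous fun p : unitInterval × Sp n => p.2.1).matrix_elem i j))
  · exact fun p i => scale_ne_zero _ (dm_ne_zero n p.2 i)
  · exact fun p i => scale_ne_zero _ (em_ne_zero n p.2 i)

lemma hmat_one (A : Sp n) : hmat n (1, A) = A.1 := by
  refine psi_eq_self A.1 _ _ _ (fun i => ?_) (fun i => ?_) A.2.1 A.2.2 (fun i j _ _ => ?_)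
  · show scale ((1:unitInterval):ℝ) (dm n A i) = lm A.1 ((i:ℕ)+1) i.isLt
    rw [show ((1:unitInterval):ℝ) = (1:ℝ) from rfl, scale_one]
    rfl
  · show scale ((1:unitInterval):ℝ) (em n A i) = lmh A.1 ((i:ℕ)+1) i.isLt
    rw [show ((1:unitInterval):ℝ) = (1:ℝ) from rfl, scale_one]
    rfl
  · show (((1:ℝ)):ℂ) * A.1 i j = A.1 i j
    norm_num

lemma hmat_zero (A : Sp n) : hmat n (0, A) = (gmap n (fmap n A)).1 := by
  have hd : (fun i => scale ((0:unitInterval):ℝ) (dm n A i))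
      = (fun i => ((fmap n A (.inl i)):ℂ)) := by
    funext i
    rw [show ((0:unitInterval):ℝ) = (0:ℝ) from rfl, scale_zero]
    rfl
  have he : (fun i => scale ((0:unitInterval):ℝ) (em n A i))
      = (fun i => ((fmap n A (.inr i)):ℂ)) := by
    funext i
    rw [show ((0:unitInterval):ℝ) = (0:ℝ) from rfl, scale_zero]
    rfl
  have hc : (fun i (j : Fin (n+1)) => ((((0:unitInterval):ℝ)):ℂ) * A.1 i j)
      = (0 : Fin n → Fin (n+1) → ℂ) := by
    funext i j
    show (((0:ℝ)):ℂ) * A.1 i j = 0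
    simp
  show psi (fun i => scale ((0:unitInterval):ℝ) (dm n A i))
      (fun i => scale ((0:unitInterval):ℝ) (em n A i))
      (fun i j => ((((0:unitInterval):ℝ)):ℂ) * A.1 i j) n = _
  rw [hd, he, hc]
  rfl

/-- the homotopy equivalence with the split torus -/
noncomputable def sumEquiv : ContinuousMap.HomotopyEquiv (Sp n) (Tor n) where
  toFun := ⟨fmap n, continuous_fmap n⟩
  invFun := ⟨gmap n, continuous_gmap n⟩
  left_inv := by
    refine ⟨ContinuousMap.Homotopy.mk
      ⟨fun p => ⟨hmat n p, (hmat_mem n p).1, (hmat_mem n p).2⟩,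
        Continuous.subtype_mk (continuous_hmat n) _⟩ ?_ ?_⟩
    · intro A
      apply Subtype.ext
      exact hmat_zero n A
    · intro A
      apply Subtype.ext
      exact hmat_one n A
  right_inv := by
    have : (⟨fmap n, continuous_fmap n⟩ : C(Sp n, Tor n)).comp ⟨gmap n, continuous_gmap n⟩
        = ContinuousMap.id (Tor n) := by
      apply ContinuousMap.ext
      intro z
      exact fmap_gmap n z
    rw [this]


end MC


open MC in
/-- The space of complex `(m-1) × m` matrices `A` with `det (A^(k)) ≠ 0` for
`k = 1, …, m - 1` and `det (Â^(j)) ≠ 0` for `j = 1, …, m - 1` (where `Â` deletes the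
first column of `A`) is homotopy equivalent to the `(2m-2)`-torus `(S¹)^(2m-2)`. -/
theorem modified_cholesky_rectangular_complement_homotopy_torus (m : ℕ) (hm : 2 ≤ m) :
    Nonempty (ContinuousMap.HomotopyEquiv
      {A : Matrix (Fin (m - 1)) (Fin m) ℂ //
        (∀ k : ℕ, 1 ≤ k → ∀ hk : k ≤ m - 1,
          (A.submatrix (Fin.castLE hk) (Fin.castLE (show k ≤ m by omega))).det ≠ 0) ∧
        (∀ j : ℕ, 1 ≤ j → ∀ hj : j ≤ m - 1,
          (Matrix.of fun a b : Fin j =>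
            A (Fin.castLE hj a) ⟨(b : ℕ) + 1, by have := b.isLt; omega⟩).det ≠ 0)}
      (Fin (2 * m - 2) → Metric.sphere (0 : ℂ) 1)) := by
  obtain ⟨n, rfl⟩ : ∃ n, m = n + 1 := ⟨m - 1, by omega⟩
  have e1 : ContinuousMap.HomotopyEquiv (Tor n) (Fin (2 * (n+1) - 2) → Metric.sphere (0:ℂ) 1) :=
    (Homeomorph.piCongrLeft (Y := fun _ => Metric.sphere (0:ℂ) 1)
      (finSumFinEquiv.trans (finCongr (by omega)))).toHomotopyEquiv
  exact ⟨((sumEquiv n).trans e1 : _)⟩
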